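/- Let (c_k)_{k∈ℕ} be nonnegative reals with Σ_{k≥0} c_k = 1, Σ_{k≥0} k·c_k = E, and Σ_{k≥0} k²·c_k = M (all series convergent). Then for every ξ ≥ 0 and every real N > 0: 1 − ( Σ_{k≥0} (k+1)·(cosh ξ)^{−k}·c_k / (E+1) )² ≤ N·ξ² + (2/N)·(E+M)/(E+1). -/

import Mathlib

lemma sinh_le_mul_cosh {t : ℝ} (ht : 0 ≤ t) : Real.sinh t ≤ t * Real.cosh t := by
  have hd : ∀ x : ℝ, HasDerivAt (fun s : ℝ => s * Real.cosh s - Real.sinh s)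
      (1 * Real.cosh x + x * Real.sinh x - Real.cosh x) x := fun x =>
    ((hasDerivAt_id x).mul (Real.hasDerivAt_cosh x)).sub (Real.hasDerivAt_sinh x)
  have hmono : MonotoneOn (fun s : ℝ => s * Real.cosh s - Real.sinh s) (Set.Ici 0) := by
    apply monotoneOn_of_deriv_nonneg (convex_Ici 0)
    · exact ((continuous_id.mul Real.continuous_cosh).sub Real.continuous_sinh).continuousOn
    · intro x _
      exact ((hd x).differentiableAt).differentiableWithinAt
    · intro x hx
      rw [interior_Ici, Set.mem_Ioi] at hx
      rw [(hd x).deriv]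
      have : 0 ≤ Real.sinh x := Real.sinh_nonneg_iff.2 hx.le
      nlinarith
  have h0 := hmono (Set.self_mem_Ici) (Set.mem_Ici.2 ht) ht
  simpa using h0

lemma one_sub_inv_cosh_le {ξ : ℝ} (hξ : 0 ≤ ξ) : 1 - (Real.cosh ξ)⁻¹ ≤ ξ ^ 2 / 2 := by
  have h2 : Real.cosh ξ = Real.cosh (ξ/2) ^ 2 + Real.sinh (ξ/2) ^ 2 := by
    have := Real.cosh_two_mul (ξ/2)
    have hsq := Real.cosh_sq (ξ/2)
    rw [show 2 * (ξ/2) = ξ by ring] at this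
    linarith
  have hsq : Real.cosh (ξ/2) ^ 2 = Real.sinh (ξ/2) ^ 2 + 1 := Real.cosh_sq (ξ/2)
  have hs : Real.sinh (ξ/2) ≤ (ξ/2) * Real.cosh (ξ/2) := sinh_le_mul_cosh (by linarith)
  have hs0 : 0 ≤ Real.sinh (ξ/2) := Real.sinh_nonneg_iff.2 (by linarith)
  have hc1 : 1 ≤ Real.cosh (ξ/2) := Real.one_le_cosh _
  have hc1' : 1 ≤ Real.cosh ξ := Real.one_le_cosh _
  have hx0 : 0 < Real.cosh ξ := by linarith
  have key : Real.cosh ξ - 1 ≤ ξ ^ 2 / 2 * Real.cosh ξ := by nlinarith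
  have hinv : (Real.cosh ξ)⁻¹ * Real.cosh ξ = 1 := inv_mul_cancel₀ hx0.ne'
  have hi0 : 0 ≤ (Real.cosh ξ)⁻¹ := inv_nonneg.2 hx0.le
  nlinarith [mul_le_mul_of_nonneg_left key hi0, sq_nonneg ξ]

theorem overlap_bound (c : ℕ → ℝ) (hc : ∀ k, 0 ≤ c k)
    (h0 : Summable c)
    (h1 : Summable fun k : ℕ => (k : ℝ) * c k)
    (h2 : Summable fun k : ℕ => (k : ℝ) ^ 2 * c k)
    (E M : ℝ)
    (hsum : ∑' k : ℕ, c k = 1)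
    (hE : ∑' k : ℕ, (k : ℝ) * c k = E)
    (hM : ∑' k : ℕ, (k : ℝ) ^ 2 * c k = M)
    (ξ : ℝ) (hξ : 0 ≤ ξ) (N : ℝ) (hN : 0 < N) :
    1 - ((∑' k : ℕ, ((k : ℝ) + 1) * Real.cosh ξ ^ (-(k : ℝ)) * c k) / (E + 1)) ^ 2 ≤
      N * ξ ^ 2 + (2 / N) * ((E + M) / (E + 1)) := by
  have hx1 : (1:ℝ) ≤ Real.cosh ξ := Real.one_le_cosh ξ
  have hx0 : (0:ℝ) < Real.cosh ξ := lt_of_lt_of_le one_pos hx1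
  set a : ℝ := (Real.cosh ξ)⁻¹ with ha
  have ha0 : 0 ≤ a := inv_nonneg.2 hx0.le
  have ha1 : a ≤ 1 := inv_le_one_of_one_le₀ hx1
  have hrpow : ∀ k : ℕ, Real.cosh ξ ^ (-(k:ℝ)) = a ^ k := fun k => by
    rw [Real.rpow_neg hx0.le, Real.rpow_natCast, ha, inv_pow]
  have hak : ∀ k : ℕ, a ^ k ≤ 1 := fun k => pow_le_one₀ ha0 ha1
  have hak0 : ∀ k : ℕ, 0 ≤ a ^ k := fun k => pow_nonneg ha0 k
  set f : ℕ → ℝ := fun k => ((k:ℝ)+1) * Real.cosh ξ ^ (-(k:ℝ)) * c k with hfdef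
  set g : ℕ → ℝ := fun k => ((k:ℝ)+1) * c k with hgdef
  have hk1 : ∀ k : ℕ, (0:ℝ) ≤ (k:ℝ) + 1 := fun k => by positivity
  have hf0 : ∀ k, 0 ≤ f k := fun k => by
    simp only [hfdef, hrpow k]
    exact mul_nonneg (mul_nonneg (hk1 k) (hak0 k)) (hc k)
  have hfg : ∀ k, f k ≤ g k := fun k => by
    simp only [hfdef, hgdef, hrpow k]
    have := mul_le_of_le_one_right (hk1 k) (hak k)
    exact mul_le_mul_of_nonneg_right this (hc k)
  have hg : Summable g := by
    have := h1.add h0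
    apply this.congr
    intro k; simp [hgdef]; ring
  have hfs : Summable f := Summable.of_nonneg_of_le hf0 hfg hg
  have hgD : ∑' k, g k = E + 1 := by
    have : ∑' k, g k = (∑' k : ℕ, (k:ℝ) * c k) + ∑' k : ℕ, c k := by
      rw [← Summable.tsum_add h1 h0]
      apply tsum_congr
      intro k; simp [hgdef]; ring
    rw [this, hE, hsum]
  have hE0 : 0 ≤ E := hE ▸ tsum_nonneg fun k => mul_nonneg (Nat.cast_nonneg k) (hc k)
  have hM0 : 0 ≤ M := hM ▸ tsum_nonneg fun k => mul_nonneg (by positivity) (hc k)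
  have hD : (0:ℝ) < E + 1 := by linarith
  set S : ℝ := ∑' k, f k with hSdef
  have hS0 : 0 ≤ S := tsum_nonneg hf0
  have hSle : S ≤ E + 1 := hgD ▸ Summable.tsum_le_tsum hfg hfs hg
  -- bound on 1 - a
  have hBa : 1 - a ≤ ξ ^ 2 / 2 := one_sub_inv_cosh_le hξ
  -- pointwise bound on the difference
  have hpt : ∀ k : ℕ, g k - f k ≤ ξ ^ 2 / 2 * (((k:ℝ)^2 + (k:ℝ)) * c k) := by
    intro k
    simp only [hfdef, hgdef, hrpow k]
    have hbern : 1 - (k:ℝ) * (1 - a) ≤ a ^ k := by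
      have := one_add_mul_le_pow (a := a - 1) (by linarith) k
      rw [show 1 + (a - 1) = a by ring] at this
      linarith [this]
    have h1a : 1 - a ^ k ≤ (k:ℝ) * (ξ ^ 2 / 2) := by
      have hk0 : (0:ℝ) ≤ (k:ℝ) := Nat.cast_nonneg k
      nlinarith [mul_le_mul_of_nonneg_left hBa hk0]
    have hck := hc k
    nlinarith [mul_le_mul_of_nonneg_left h1a (hk1 k), hak k, hk1 k]
  have hhs : Summable (fun k : ℕ => ξ ^ 2 / 2 * (((k:ℝ)^2 + (k:ℝ)) * c k)) := by
    apply Summable.mul_left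
    apply (h2.add h1).congr
    intro k; ring
  have hdiff : E + 1 - S ≤ ξ ^ 2 / 2 * (M + E) := by
    have hsub : E + 1 - S = ∑' k, (g k - f k) := by
      rw [Summable.tsum_sub hg hfs, hgD]
    have hle : ∑' k, (g k - f k) ≤ ∑' k : ℕ, ξ ^ 2 / 2 * (((k:ℝ)^2 + (k:ℝ)) * c k) :=
      Summable.tsum_le_tsum hpt (hg.sub hfs) hhs
    have hrsum : ∑' k : ℕ, ξ ^ 2 / 2 * (((k:ℝ)^2 + (k:ℝ)) * c k) = ξ ^ 2 / 2 * (M + E) := by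
      rw [tsum_mul_left]
      congr 1
      have heq : ∑' k : ℕ, (((k:ℝ)^2 + (k:ℝ)) * c k) = (∑' k : ℕ, (k:ℝ)^2 * c k) + ∑' k : ℕ, (k:ℝ) * c k := by
        rw [← Summable.tsum_add h2 h1]
        apply tsum_congr; intro k; ring
      rw [heq, hM, hE]
    rw [hsub, ← hrsum]; exact hle
  -- final case analysis
  set r : ℝ := S / (E + 1) with hrdef
  have hr0 : 0 ≤ r := div_nonneg hS0 hD.le
  have hr1 : r ≤ 1 := (div_le_one hD).2 hSle
  have hrS : r * (E + 1) = S := div_mul_cancel₀ S hD.ne'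
  have hb0 : 0 ≤ (E + M) / (E + 1) := div_nonneg (by linarith) hD.le
  rcases le_or_gt ((E + M) / (E + 1)) N with hb | hb
  · -- 1 - r² ≤ 2(1-r) ≤ ξ² (E+M)/(E+1) ≤ N ξ²
    have h2r : 2 * (1 - r) ≤ ξ ^ 2 * ((E + M) / (E + 1)) := by
      have heq : 2 * (1 - r) = (2 * (E + 1 - S)) / (E + 1) := by
        field_simp [hrdef]
        linarith [hrS]
      rw [heq, ← mul_div_assoc]
      exact (div_le_div_iff_of_pos_right hD).2 (by linarith)
    have hNx : ξ ^ 2 * ((E + M) / (E + 1)) ≤ N * ξ ^ 2 := by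
      calc ξ ^ 2 * ((E + M) / (E + 1)) ≤ ξ ^ 2 * N :=
            mul_le_mul_of_nonneg_left hb (sq_nonneg ξ)
        _ = N * ξ ^ 2 := by ring
    have hrhs : 0 ≤ (2 / N) * ((E + M) / (E + 1)) := by positivity
    nlinarith
  · -- 1 - r² ≤ 1 ≤ (2/N)(E+M)/(E+1)
    have h1b : 1 < (E + M) / (E + 1) / N := (one_lt_div hN).2 hb
    have : (2:ℝ) < (2 / N) * ((E + M) / (E + 1)) := by
      have := mul_lt_mul_of_pos_left h1b (by norm_num : (0:ℝ) < 2)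
      calc (2:ℝ) = 2 * 1 := by ring
        _ < 2 * ((E + M) / (E + 1) / N) := this
        _ = (2 / N) * ((E + M) / (E + 1)) := by ring
    nlinarith [sq_nonneg r, sq_nonneg ξ, mul_nonneg hN.le (sq_nonneg ξ)]
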